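/- For every positive integer m: if there exist positive integers k and i with m = k·3^i + a_i, then m appears exactly twice in the B-sequence, and otherwise m appears exactly once. Moreover the B-sequence is monotone increasing: B(n) ≤ B(n+1) for all n ≥ 1. -/
import Mathlib

/-- The auxiliary sequence: `a 1 = 3`, `a i = 3 * a (i-1) - 1` for `i ≥ 2`. -/
def a : ℕ → ℕ
  | 0 => 0
  | 1 => 3
  | n + 2 => 3 * a (n + 1) - 1

/-- `R(m, i) = max(0, ⌊(m − a i − 1)/3^i⌋)` (truncated ℕ-subtraction gives the max). -/
def Rmi (m i : ℕ) : ℕ := (m - a i - 1) / 3 ^ i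

/-- `R(m) = ∑_{i=1}^∞ R(m, i)`; all terms with `i > m` vanish, so a finite sum suffices. -/
def R (m : ℕ) : ℕ := ∑ i ∈ Finset.Icc 1 m, Rmi m i

/-- `m` has a witness pair `(k, i)` of positive integers with `m = k·3^i + a i`. -/
def HasWitness (m : ℕ) : Prop := ∃ k i : ℕ, 1 ≤ k ∧ 1 ≤ i ∧ m = k * 3 ^ i + a i

/-! ### basic facts about `a` -/

lemma a_succ : ∀ i, 1 ≤ i → a (i + 1) = 3 * a i - 1
  | n + 1, _ => rfl

lemma a_ge : ∀ i, 1 ≤ i → i + 2 ≤ a i := by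
  intro i
  induction i with
  | zero => omega
  | succ n ih =>
    intro _
    rcases Nat.eq_zero_or_pos n with h | h
    · subst h; show 3 ≤ a 1; rw [show a 1 = 3 from rfl]
    · have := ih h
      rw [a_succ n h]; omega

/-! ### the witness indicator `w` -/

def w (x : ℕ) : ℕ :=
  if x < 6 then 0
  else if x % 3 = 0 then 1
  else if x % 3 = 1 then 0
  else w ((x+1)/3)
termination_by x
decreasing_by omega

lemma w_lt6 {x : ℕ} (h : x < 6) : w x = 0 := by rw [w]; simp [h]

lemma w_mod0 {x : ℕ} (h6 : 6 ≤ x) (h : x % 3 = 0) : w x = 1 := by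
  rw [w]; simp [h, show ¬ x < 6 by omega]

lemma w_mod1 {x : ℕ} (h : x % 3 = 1) : w x = 0 := by
  rw [w]
  by_cases h6 : x < 6 <;> simp [h, h6]

lemma w_mod2 {x : ℕ} (h : x % 3 = 2) : w x = w ((x+1)/3) := by
  by_cases h6 : x < 6
  · rw [w_lt6 h6, w_lt6 (by omega)]
  · rw [w]; simp [h, h6, show ¬ x % 3 = 0 by omega, show ¬ x % 3 = 1 by omega]

lemma w_le_one (x : ℕ) : w x ≤ 1 := by
  induction x using Nat.strong_induction_on with
  | _ x ih =>
    by_cases h6 : x < 6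
    · rw [w_lt6 h6]; omega
    · rcases (show x % 3 = 0 ∨ x % 3 = 1 ∨ x % 3 = 2 by omega) with h | h | h
      · rw [w_mod0 (by omega) h]
      · rw [w_mod1 h]; omega
      · rw [w_mod2 h]; exact ih _ (by omega)

lemma w_witness : ∀ i, ∀ k, 1 ≤ i → 1 ≤ k → w (k * 3 ^ i + a i) = 1 := by
  intro i
  induction i using Nat.strong_induction_on with
  | _ i ih =>
    intro k hi hk
    match i, hi with
    | 1, _ =>
      rw [pow_one, show a 1 = 3 from rfl]
      exact w_mod0 (by omega) (by omega)
    | (n+2), _ =>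
      have hn : 1 ≤ n + 1 := by omega
      have ha := a_succ (n+1) hn
      have h3 : 3 ≤ a (n+1) := by have := a_ge (n+1) hn; omega
      have hp : k * 3 ^ (n + 2) = 3 * (k * 3 ^ (n+1)) := by rw [pow_succ]; ring
      have hx : k * 3 ^ (n + 2) + a (n + 2) + 1 = 3 * (k * 3 ^ (n+1) + a (n+1)) := by
        rw [hp, ha]; omega
      have hmod : (k * 3 ^ (n + 2) + a (n + 2)) % 3 = 2 := by omega
      rw [w_mod2 hmod, show (k * 3 ^ (n + 2) + a (n + 2) + 1)/3 = k * 3 ^ (n+1) + a (n+1) by omega]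
      exact ih (n+1) (by omega) k hn hk

lemma w_eq_one_iff (m : ℕ) : w m = 1 ↔ HasWitness m := by
  constructor
  · intro h
    induction m using Nat.strong_induction_on with
    | _ m ih =>
      by_cases h6 : m < 6
      · rw [w_lt6 h6] at h; omega
      · rcases (show m % 3 = 0 ∨ m % 3 = 1 ∨ m % 3 = 2 by omega) with hr | hr | hr
        · refine ⟨m/3 - 1, 1, by omega, le_refl 1, ?_⟩
          rw [pow_one, show a 1 = 3 from rfl]; omega
        · rw [w_mod1 hr] at h; omega
        · rw [w_mod2 hr] at h
          obtain ⟨k, i, hk, hi, he⟩ := ih ((m+1)/3) (by omega) h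
          refine ⟨k, i + 1, hk, by omega, ?_⟩
          have h3 : 3 ≤ a i := by have := a_ge i hi; omega
          have h31 : m + 1 = 3 * ((m+1)/3) := by omega
          have h32 : k * 3 ^ (i+1) = 3 * (k * 3 ^ i) := by rw [pow_succ]; ring
          rw [a_succ i hi, h32]
          omega
  · rintro ⟨k, i, hk, hi, rfl⟩
    exact w_witness i k hi hk

lemma w_eq_zero_iff (m : ℕ) : w m = 0 ↔ ¬ HasWitness m := by
  rw [← w_eq_one_iff]; have := w_le_one m; omega

/-! ### facts about `R` -/

lemma Rmi_small {m i : ℕ} (hi : 1 ≤ i) (hm : m ≤ 6) : Rmi m i = 0 := by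
  have h3 : 3 ≤ a i := by have := a_ge i hi; omega
  have : m - a i - 1 < 3 ^ i := by
    have : 3 ^ 1 ≤ 3 ^ i := Nat.pow_le_pow_right (by omega) hi
    omega
  exact Nat.div_eq_of_lt this

lemma R_small {m : ℕ} (hm : m ≤ 6) : R m = 0 := by
  apply Finset.sum_eq_zero
  intro i hi
  simp only [Finset.mem_Icc] at hi
  exact Rmi_small hi.1 hm

lemma R_rec (m : ℕ) (hm : 6 ≤ m) : R m = (m - 4)/3 + R (m/3 + 1) := by
  have h1 : R m = Rmi m 1 + ∑ i ∈ Finset.Icc 2 m, Rmi m i := by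
    rw [R, show Finset.Icc 2 m = Finset.Ioc 1 m from Finset.Icc_add_one_left_eq_Ioc 1 m,
      ← Finset.sum_Ioc_add_eq_sum_Icc (show 1 ≤ m by omega), add_comm]
  have h2 : Rmi m 1 = (m - 4)/3 := by
    rw [Rmi, pow_one, show a 1 = 3 from rfl]
    omega
  have h3 : ∑ i ∈ Finset.Icc 2 m, Rmi m i = ∑ i ∈ Finset.Icc 1 (m-1), Rmi m (i+1) := by
    have hmap : Finset.Icc 2 m = (Finset.Icc 1 (m-1)).map (addRightEmbedding 1) := by
      rw [Finset.map_add_right_Icc]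
      congr 1
      omega
    rw [hmap, Finset.sum_map]
    simp only [addRightEmbedding_apply]
  have h4 : ∀ i ∈ Finset.Icc 1 (m-1), Rmi m (i+1) = Rmi (m/3+1) i := by
    intro i hi
    simp only [Finset.mem_Icc] at hi
    have ha := a_succ i hi.1
    have h3a : 3 ≤ a i := by have := a_ge i hi.1; omega
    rw [Rmi, Rmi]
    have e1 : m - a (i+1) - 1 = m - 3 * a i := by omega
    have e2 : m/3 + 1 - a i - 1 = m/3 - a i := by omega
    rw [e1, e2, pow_succ, mul_comm (3^i) 3, ← Nat.div_div_eq_div_mul,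
      show (m - 3 * a i)/3 = m/3 - a i by omega]
  rw [h1, h2, h3, Finset.sum_congr rfl h4]
  congr 1
  rw [R]
  apply (Finset.sum_subset _ _).symm
  · intro x hx
    simp only [Finset.mem_Icc] at *
    omega
  · intro x hx hx2
    simp only [Finset.mem_Icc] at *
    have hax : x + 2 ≤ a x := a_ge x (by omega)
    rw [Rmi, show m/3 + 1 - a x - 1 = 0 by omega]
    simp

lemma R_step (m : ℕ) : R (m + 1) = R m + w m := by
  induction m using Nat.strong_induction_on with
  | _ m ih =>
    by_cases h6 : m < 6
    · rw [R_small (by omega), R_small (by omega), w_lt6 h6]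
    · push_neg at h6
      rw [R_rec m h6, R_rec (m+1) (by omega)]
      rcases (show m % 3 = 0 ∨ m % 3 = 1 ∨ m % 3 = 2 by omega) with hr | hr | hr
      · rw [w_mod0 h6 hr, show (m+1)/3 = m/3 by omega]; omega
      · rw [w_mod1 hr, show (m+1)/3 = m/3 by omega]; omega
      · rw [w_mod2 hr, show (m+1)/3 + 1 = (m/3 + 1) + 1 by omega,
          ih (m/3+1) (by omega), show (m+1)/3 = m/3 + 1 by omega]
        omega
def N (m : ℕ) : ℕ := m + R m

lemma N_ge (q : ℕ) : q ≤ N q := Nat.le_add_right q (R q)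

lemma N_succ (m : ℕ) : N (m+1) = N m + 1 + w m := by
  show m + 1 + R (m+1) = m + R m + 1 + w m
  rw [R_step]; ring

lemma N_strictMono : StrictMono N :=
  strictMono_nat_of_lt_succ (fun n => by rw [N_succ]; omega)

lemma N_succ' (q : ℕ) (hq : 1 ≤ q) : N q = N (q-1) + 1 + w (q-1) := by
  have := N_succ (q-1); rw [show q-1+1 = q by omega] at this; omega

def g (n : ℕ) : ℕ := ((Finset.Icc 1 n).filter (fun m => N m ≤ n)).card

lemma g_spec (m t : ℕ) (hm : 1 ≤ m) (ht : t ≤ w m) : g (N m + t) = m := by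
  have hNm := N_ge m
  have hfil : (Finset.Icc 1 (N m + t)).filter (fun j => N j ≤ N m + t) = Finset.Icc 1 m := by
    ext j
    simp only [Finset.mem_filter, Finset.mem_Icc]
    constructor
    · rintro ⟨⟨h1, _⟩, h3⟩
      refine ⟨h1, ?_⟩
      by_contra hc
      push_neg at hc
      have h4 : N (m+1) ≤ N j := N_strictMono.le_iff_le.mpr (by omega)
      have h5 := N_succ m
      omega
    · rintro ⟨h1, h2⟩
      have hNj : N j ≤ N m := N_strictMono.le_iff_le.mpr h2
      have := N_ge j
      exact ⟨⟨h1, by omega⟩, by omega⟩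
  rw [g, hfil, Nat.card_Icc]; omega

lemma exists_rep (n : ℕ) (hn : 1 ≤ n) : ∃ m t, 1 ≤ m ∧ t ≤ w m ∧ n = N m + t := by
  induction n with
  | zero => omega
  | succ n ih =>
    rcases Nat.eq_zero_or_pos n with h | h
    · subst h
      refine ⟨1, 0, le_refl 1, by omega, ?_⟩
      show 1 = 1 + R 1 + 0
      rw [R_small (by omega)]
    · obtain ⟨m, t, hm, ht, rfl⟩ := ih h
      rcases Nat.lt_or_ge t (w m) with h2 | h2
      · exact ⟨m, t+1, hm, h2, by omega⟩
      · refine ⟨m+1, 0, by omega, by omega, ?_⟩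
        rw [N_succ]; omega

lemma g_pos {n : ℕ} (hn : 1 ≤ n) : 1 ≤ g n := by
  obtain ⟨m, t, hm, ht, rfl⟩ := exists_rep n hn
  rw [g_spec m t hm ht]; exact hm

lemma g_eq_iff {m : ℕ} (hm : 1 ≤ m) (n : ℕ) :
    (1 ≤ n ∧ g n = m) ↔ (N m ≤ n ∧ n ≤ N m + w m) := by
  constructor
  · rintro ⟨hn, hg⟩
    obtain ⟨m', t', hm', ht', rfl⟩ := exists_rep n hn
    rw [g_spec m' t' hm' ht'] at hg
    subst hg
    omega
  · rintro ⟨h1, h2⟩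
    have hNm := N_ge m
    have he : n = N m + (n - N m) := by omega
    rw [he, g_spec m (n - N m) hm (by omega)]
    omega

lemma g_mono (n : ℕ) : g n ≤ g (n+1) := by
  apply Finset.card_le_card
  intro x hx
  simp only [Finset.mem_filter, Finset.mem_Icc] at *
  omega

/-! ### values of `g` near `N q` -/

lemma gN (q : ℕ) (hq : 1 ≤ q) : g (N q) = q := g_spec q 0 hq (Nat.zero_le _)

lemma gN1 (q : ℕ) (hq : 2 ≤ q) : g (N q - 1) = q - 1 := by
  have h1 := N_succ' q (by omega)
  rw [show N q - 1 = N (q-1) + w (q-1) by omega,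
    g_spec (q-1) (w (q-1)) (by omega) (le_refl _)]

lemma gN2 (q : ℕ) (hq : 3 ≤ q) : g (N q - 2) = q - 2 + w (q-1) := by
  have h1 := N_succ' q (by omega)
  have h2 := N_ge (q-1)
  rcases (show w (q-1) = 0 ∨ w (q-1) = 1 by have := w_le_one (q-1); omega) with h | h
  · rw [show N q - 2 = N (q-1) - 1 by omega, gN1 (q-1) (by omega)]; omega
  · rw [show N q - 2 = N (q-1) by omega, gN (q-1) (by omega)]; omega

lemma gN3 (q : ℕ) (hq : 4 ≤ q) : g (N q - 3) = q - 3 + max (w (q-1)) (w (q-2)) := by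
  have h1 := N_succ' q (by omega)
  have h2 := N_ge (q-1)
  have h3 := w_le_one (q-2)
  rcases (show w (q-1) = 0 ∨ w (q-1) = 1 by have := w_le_one (q-1); omega) with h | h
  · rw [show N q - 3 = N (q-1) - 2 by omega, gN2 (q-1) (by omega),
      show q - 1 - 1 = q - 2 by omega]
    omega
  · rw [show N q - 3 = N (q-1) - 1 by omega, gN1 (q-1) (by omega)]
    omega

lemma gNp1 (q : ℕ) (hq : 1 ≤ q) : g (N q + 1) = q + 1 - w q := by
  rcases (show w q = 0 ∨ w q = 1 by have := w_le_one q; omega) with h | h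
  · rw [show N q + 1 = N (q+1) by rw [N_succ]; omega, gN (q+1) (by omega)]; omega
  · rw [g_spec q 1 hq (by omega)]; omega
lemma key (m t : ℕ) (hm : 6 ≤ m) (ht : t ≤ w m) :
    g (N m + t - g (N m + t - 1)) + g (N m + t - g (N m + t - 2)) +
      g (N m + t - g (N m + t - 3)) = m := by
  have hq : 3 ≤ m / 3 + 1 := by omega
  set q := m / 3 + 1 with hqdef
  have hR : R m = (m - 4)/3 + R q := R_rec m hm
  have hNm : N m = m + R m := rfl
  have hNq : N q = q + R q := rfl
  have hwq1 := w_le_one (q-1)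
  have hwq := w_le_one q
  have hwm := w_le_one m
  have e1 : g (N m - 1) = m - 1 := gN1 m (by omega)
  have e2 : g (N m - 2) = m - 2 + w (m-1) := gN2 m (by omega)
  rcases (show t = 0 ∨ (t = 1 ∧ w m = 1) by omega) with rfl | ⟨rfl, hw⟩
  · -- t = 0
    have e3 : g (N m - 3) = m - 3 + max (w (m-1)) (w (m-2)) := gN3 m (by omega)
    simp only [Nat.add_zero]
    rw [e1, e2, e3]
    rcases (show m % 3 = 0 ∨ m % 3 = 1 ∨ m % 3 = 2 by omega) with hr | hr | hr
    · -- r = 0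
      have hw1 : w (m-1) = w (q-1) := by
        rw [w_mod2 (by omega), show (m-1+1)/3 = q - 1 by omega]
      have hw2 : w (m-2) = 0 := w_mod1 (by omega)
      have hmax : max (w (m-1)) (w (m-2)) = w (q-1) := by
        rw [hw1, hw2]; exact Nat.max_eq_left (Nat.zero_le _)
      rcases (show w (q-1) = 0 ∨ w (q-1) = 1 by omega) with h | h
      · rw [show N m - (m - 1) = N q - 2 by omega,
            show N m - (m - 2 + w (m-1)) = N q - 1 by omega,
            show N m - (m - 3 + max (w (m-1)) (w (m-2))) = N q by omega,
            gN2 q (by omega), gN1 q (by omega), gN q (by omega)]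
        omega
      · rw [show N m - (m - 1) = N q - 2 by omega,
            show N m - (m - 2 + w (m-1)) = N q - 2 by omega,
            show N m - (m - 3 + max (w (m-1)) (w (m-2))) = N q - 1 by omega,
            gN2 q (by omega), gN1 q (by omega)]
        omega
    · -- r = 1
      have hw1 : w (m-1) = 1 := w_mod0 (by omega) (by omega)
      have hw2 : w (m-2) = w (q-1) := by
        rw [w_mod2 (by omega), show (m-2+1)/3 = q - 1 by omega]
      have hmax : max (w (m-1)) (w (m-2)) = 1 := by
        rw [hw1, hw2]; exact Nat.max_eq_left (by omega)
      rw [show N m - (m - 1) = N q - 1 by omega,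
          show N m - (m - 2 + w (m-1)) = N q - 1 by omega,
          show N m - (m - 3 + max (w (m-1)) (w (m-2))) = N q by omega,
          gN1 q (by omega), gN q (by omega)]
      omega
    · -- r = 2
      have hw1 : w (m-1) = 0 := w_mod1 (by omega)
      have hw2 : w (m-2) = 1 := w_mod0 (by omega) (by omega)
      have hmax : max (w (m-1)) (w (m-2)) = 1 := by
        rw [hw1, hw2]; exact Nat.max_eq_right (by omega)
      rw [show N m - (m - 1) = N q - 1 by omega,
          show N m - (m - 2 + w (m-1)) = N q by omega,
          show N m - (m - 3 + max (w (m-1)) (w (m-2))) = N q by omega,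
          gN1 q (by omega), gN q (by omega)]
      omega
  · -- t = 1, w m = 1
    rw [show N m + 1 - 1 = N m by omega, show N m + 1 - 2 = N m - 1 by omega,
        show N m + 1 - 3 = N m - 2 by omega, gN m (by omega), e1, e2]
    rcases (show m % 3 = 0 ∨ m % 3 = 1 ∨ m % 3 = 2 by omega) with hr | hr | hr
    · -- r = 0
      have hw1 : w (m-1) = w (q-1) := by
        rw [w_mod2 (by omega), show (m-1+1)/3 = q - 1 by omega]
      rcases (show w (q-1) = 0 ∨ w (q-1) = 1 by omega) with h | h
      · rw [show N m + 1 - m = N q - 2 by omega,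
            show N m + 1 - (m - 1) = N q - 1 by omega,
            show N m + 1 - (m - 2 + w (m-1)) = N q by omega,
            gN2 q (by omega), gN1 q (by omega), gN q (by omega)]
        omega
      · rw [show N m + 1 - m = N q - 2 by omega,
            show N m + 1 - (m - 1) = N q - 1 by omega,
            show N m + 1 - (m - 2 + w (m-1)) = N q - 1 by omega,
            gN2 q (by omega), gN1 q (by omega)]
        omega
    · -- r = 1 : contradiction
      have := w_mod1 hr
      omega
    · -- r = 2
      have hw1 : w (m-1) = 0 := w_mod1 (by omega)
      have hwqe : w q = 1 := by
        rw [← show (m+1)/3 = q by omega, ← w_mod2 hr]; exact hw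
      rw [show N m + 1 - m = N q - 1 by omega,
          show N m + 1 - (m - 1) = N q by omega,
          show N m + 1 - (m - 2 + w (m-1)) = N q + 1 by omega,
          gN1 q (by omega), gN q (by omega), gNp1 q (by omega)]
      omega

/-- `B` is the `B`-sequence: `B 0 = 0`, `B n = n` for `1 ≤ n ≤ 5`, and
`B n = B (n - B (n-1)) + B (n - B (n-2)) + B (n - B (n-3))` for `n ≥ 6`. -/
def IsBSeq (B : ℕ → ℕ) : Prop :=
  B 0 = 0 ∧ (∀ n, 1 ≤ n → n ≤ 5 → B n = n) ∧
    ∀ n, 6 ≤ n → B n = B (n - B (n - 1)) + B (n - B (n - 2)) + B (n - B (n - 3))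

lemma B_eq_g (B : ℕ → ℕ) (hB : IsBSeq B) : ∀ n, B n = g n := by
  obtain ⟨h0, h5, hrec⟩ := hB
  intro n
  induction n using Nat.strong_induction_on with
  | _ n ih =>
    rcases Nat.lt_or_ge n 6 with hn | hn
    · rcases Nat.eq_zero_or_pos n with h | h
      · subst h; rw [h0]; simp [g]
      · rw [h5 n h (by omega)]
        have hRn : R n = 0 := R_small (by omega)
        have hgn := g_spec n 0 h (Nat.zero_le _)
        rw [show N n + 0 = n by show n + R n + 0 = n; omega] at hgn
        omega
    · rw [hrec n hn, ih (n-1) (by omega), ih (n-2) (by omega), ih (n-3) (by omega)]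
      have hg1 : 1 ≤ g (n-1) := g_pos (by omega)
      have hg2 : 1 ≤ g (n-2) := g_pos (by omega)
      have hg3 : 1 ≤ g (n-3) := g_pos (by omega)
      rw [ih (n - g (n-1)) (by omega), ih (n - g (n-2)) (by omega),
          ih (n - g (n-3)) (by omega)]
      obtain ⟨m, t, hm, ht, rfl⟩ := exists_rep n (by omega)
      have hm6 : 6 ≤ m := by
        by_contra hc
        push_neg at hc
        have h1 : N (m+1) ≤ N 6 := N_strictMono.monotone (by omega)
        have h2 := N_succ m
        have h3 : N 6 = 6 := by show 6 + R 6 = 6; rw [R_small (le_refl 6)]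
        omega
      rw [key m t hm6 ht, g_spec m t hm ht]

/-- a positive integer `m` appears exactly twice in the B-sequence if it has a
witness pair and exactly once otherwise; moreover the B-sequence is monotone increasing. -/
theorem stmt_1 (B : ℕ → ℕ) (hB : IsBSeq B) :
    (∀ m : ℕ, 1 ≤ m →
      ((∃ k i : ℕ, 1 ≤ k ∧ 1 ≤ i ∧ m = k * 3 ^ i + a i) →
        {n : ℕ | 1 ≤ n ∧ B n = m}.encard = 2) ∧
      (¬(∃ k i : ℕ, 1 ≤ k ∧ 1 ≤ i ∧ m = k * 3 ^ i + a i) →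
        {n : ℕ | 1 ≤ n ∧ B n = m}.encard = 1)) ∧
    (∀ n : ℕ, 1 ≤ n → B n ≤ B (n + 1)) := by
  have hBg := B_eq_g B hB
  constructor
  · intro m hm
    have hset : {n : ℕ | 1 ≤ n ∧ B n = m} = Set.Icc (N m) (N m + w m) := by
      ext n
      simp only [Set.mem_setOf_eq, Set.mem_Icc]
      rw [hBg n]
      exact g_eq_iff hm n
    have hNm := N_ge m
    have hcard : {n : ℕ | 1 ≤ n ∧ B n = m}.encard = ((w m + 1 : ℕ) : ℕ∞) := by
      rw [hset, ← Finset.coe_Icc, Set.encard_coe_eq_coe_finsetCard, Nat.card_Icc]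
      congr 1
      omega
    constructor
    · intro hw
      have hw1 : w m = 1 := (w_eq_one_iff m).mpr hw
      rw [hcard, hw1]
      norm_num
    · intro hw
      have hw0 : w m = 0 := (w_eq_zero_iff m).mpr hw
      rw [hcard, hw0]
      norm_num
  · intro n _
    rw [hBg n, hBg (n+1)]
    exact g_mono n
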